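/- Let X be a d-mode tensor in ℝ^{I₁×⋯×I_d} and let X̂ = G ×₁ A₁ ⋯ ×_d A_d be its rank-(r₁,…,r_d) HOSVD approximation. Then ‖X − X̂‖_F² ≤ Σ_{j=1}^d ‖X ×_j (I − A_j A_jᵀ)‖_F² = Σ_{j=1}^d Σ_{i=r_j+1}^{I_j} σ_i(X_(j))². -/

import Mathlib

open MeasureTheory ProbabilityTheory BigOperators Matrix

noncomputable section

/-- A `d`-mode tensor with dimensions `I 0 × ⋯ × I (d-1)`. -/
abbrev Tensor (d : ℕ) (I : Fin d → ℕ) : Type := (∀ j, Fin (I j)) → ℝ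

namespace Tensor

variable {d : ℕ} {I J : Fin d → ℕ}

/-- Square of the Frobenius norm of a tensor. -/
def frobSq (X : Tensor d I) : ℝ := ∑ i, (X i) ^ 2

/-- Frobenius norm of a tensor. -/
def frobNorm (X : Tensor d I) : ℝ := Real.sqrt (frobSq X)

/-- Mode-`j` product of a tensor with a square matrix `A ∈ ℝ^{I_j × I_j}`. -/
def modeMul (X : Tensor d I) (j : Fin d) (A : Matrix (Fin (I j)) (Fin (I j)) ℝ) :
    Tensor d I :=
  fun i => ∑ k, A (i j) k * X (Function.update i j k)

/-- `modeMulFirst X A t = X ×₁ A₁ ×₂ A₂ ⋯ ×ₜ Aₜ` (the first `t` modes, square matrices). -/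
def modeMulFirst (X : Tensor d I) (A : ∀ j, Matrix (Fin (I j)) (Fin (I j)) ℝ) : ℕ → Tensor d I
  | 0 => X
  | t + 1 =>
    if h : t < d then modeMul (modeMulFirst X A t) ⟨t, h⟩ (A ⟨t, h⟩)
    else modeMulFirst X A t

/-- Simultaneous mode product in every mode: `multiMul G A = G ×₁ A₁ ⋯ ×_d A_d`,
where `A j ∈ ℝ^{I_j × J_j}` and `G` has dimensions `J`. -/
def multiMul (G : Tensor d J) (A : ∀ j, Matrix (Fin (I j)) (Fin (J j)) ℝ) : Tensor d I :=
  fun i => ∑ k : ∀ j, Fin (J j), (∏ j, A j (i j) (k j)) * G k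

/-- Mode-`j` unfolding of a tensor, as a matrix with rows indexed by `Fin (I j)` and
columns indexed by the remaining modes. -/
def unfold (X : Tensor d I) (j : Fin d) :
    Matrix (Fin (I j)) (∀ k : {k : Fin d // k ≠ j}, Fin (I k.1)) ℝ :=
  Matrix.of fun a b => X fun k => if h : k = j then Fin.cast (congrArg I h.symm) a else b ⟨k, h⟩

end Tensor

/-- `singularValues A i` is the `(i+1)`-st largest singular value of `A`
(0-based indexing; `0` when `i` exceeds the number of rows). -/
def singularValues {m n : Type*} [Fintype m] [Fintype n] [DecidableEq m]
    (A : Matrix m n ℝ) : ℕ → ℝ := fun i =>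
  if h : i < Fintype.card m then
    let ev : Fin (Fintype.card m) → ℝ :=
      (Matrix.isHermitian_mul_conjTranspose_self A).eigenvalues ∘ (Fintype.equivFin m).symm
    Real.sqrt ((ev ∘ Tuple.sort ev) ⟨Fintype.card m - 1 - i, by omega⟩)
  else 0

/-- Spectral norm (largest singular value). -/
def specNorm {m n : Type*} [Fintype m] [Fintype n] [DecidableEq m]
    (A : Matrix m n ℝ) : ℝ := singularValues A 0

/-- Square of the Frobenius norm of a matrix. -/
def matFrobSq {m n : Type*} [Fintype m] [Fintype n] (M : Matrix m n ℝ) : ℝ :=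
  ∑ i, ∑ j, (M i j) ^ 2

/-- Frobenius norm of a matrix. -/
def matFrobNorm {m n : Type*} [Fintype m] [Fintype n] (M : Matrix m n ℝ) : ℝ :=
  Real.sqrt (matFrobSq M)

/-- A rectangular "diagonal" matrix with entries `s 0, s 1, …` placed along the diagonal
determined by the chosen enumerations of the index types. -/
def diagMat (m n : Type*) [Fintype m] [Fintype n] (s : ℕ → ℝ) : Matrix m n ℝ :=
  Matrix.of fun a b =>
    if (Fintype.equivFin m a : ℕ) = (Fintype.equivFin n b : ℕ) then s (Fintype.equivFin m a)
    else 0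

/-- `IsSVD M U s V` : `M = U Σ Vᵀ` is a singular value decomposition of `M`, with `U, V`
orthogonal and the singular values `s` nonnegative and arranged in decreasing order. -/
def IsSVD {m n : Type*} [Fintype m] [Fintype n] [DecidableEq m] [DecidableEq n]
    (M : Matrix m n ℝ) (U : Matrix m m ℝ) (s : ℕ → ℝ) (V : Matrix n n ℝ) : Prop :=
  Uᵀ * U = 1 ∧ Vᵀ * V = 1 ∧ Antitone s ∧ (∀ i, 0 ≤ s i) ∧
    (∀ i, min (Fintype.card m) (Fintype.card n) ≤ i → s i = 0) ∧
    M = U * diagMat m n s * Vᵀ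

/-- `B` is the rank-`r` truncated SVD of `M`: it is obtained from an SVD of `M` by
retaining only the `r` largest singular values. -/
def IsSVDTruncation {m n : Type*} [Fintype m] [Fintype n] [DecidableEq m] [DecidableEq n]
    (M : Matrix m n ℝ) (r : ℕ) (B : Matrix m n ℝ) : Prop :=
  ∃ U s V, IsSVD M U s V ∧ B = U * diagMat m n (fun i => if i < r then s i else 0) * Vᵀ

/-- `A` consists of the first `r` left singular vectors of `M` (the columns of the
orthogonal factor `U` of an SVD of `M` corresponding to the `r` largest singular values). -/
def IsTopLeftSingVecs {m n : Type*} [Fintype m] [Fintype n] [DecidableEq m] [DecidableEq n]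
    (M : Matrix m n ℝ) (r : ℕ) (A : Matrix m (Fin r) ℝ) : Prop :=
  ∃ U s V, IsSVD M U s V ∧ ∃ h : r ≤ Fintype.card m,
    ∀ (a : m) (k : Fin r), A a k = U a ((Fintype.equivFin m).symm (Fin.castLE h k))

/-- Column space of a matrix. -/
def colSpace {m n : Type*} [Fintype n] (M : Matrix m n ℝ) : Submodule ℝ (m → ℝ) :=
  LinearMap.range M.mulVecLin

/-- `Xopt` is a best multilinear rank-`r` approximation of `X` in the Frobenius norm. -/
def IsBestRankApprox {d : ℕ} {I : Fin d → ℕ} (X : Tensor d I) (r : Fin d → ℕ)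
    (Xopt : Tensor d I) : Prop :=
  (∀ j, (Tensor.unfold Xopt j).rank ≤ r j) ∧
    ∀ Y : Tensor d I, (∀ j, (Tensor.unfold Y j).rank ≤ r j) →
      Tensor.frobNorm (X - Xopt) ≤ Tensor.frobNorm (X - Y)

/-- `P` is a selection operator: its columns are distinct columns of the identity matrix. -/
def IsSelection {a b : Type*} [DecidableEq a] (P : Matrix a b ℝ) : Prop :=
  ∃ f : b → a, Function.Injective f ∧ ∀ i k, P i k = if i = f k then 1 else 0

section STHOSVD

variable {d : ℕ}

/-- Dimensions of the partially truncated core tensor in the STHOSVD with processing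
order `[0, 1, …, d-1]`: after processing the first `t` modes, mode `k` has dimension
`r k` for `k < t` and `I k` otherwise. -/
def stDims (I r : Fin d → ℕ) (t : ℕ) : Fin d → ℕ := fun k => if (k : ℕ) < t then r k else I k

theorem stDims_lt {I r : Fin d → ℕ} {t : ℕ} {k : Fin d} (h : (k : ℕ) < t) :
    stDims I r t k = r k := if_pos h

theorem stDims_ge {I r : Fin d → ℕ} {t : ℕ} {k : Fin d} (h : ¬ (k : ℕ) < t) :
    stDims I r t k = I k := if_neg h

theorem stDims_self {I r : Fin d → ℕ} (j : Fin d) : stDims I r (j : ℕ) j = I j :=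
  stDims_ge (lt_irrefl _)

/-- The partially truncated core tensor `G^{(t)} = X ×₁ A₁ᵀ ⋯ ×ₜ Aₜᵀ` of the STHOSVD
(processing order `[0, …, d-1]`). -/
def stCore {I r : Fin d → ℕ} (X : Tensor d I)
    (A : ∀ j, Matrix (Fin (I j)) (Fin (r j)) ℝ) (t : ℕ) : Tensor d (stDims I r t) :=
  Tensor.multiMul X fun k =>
    if h : (k : ℕ) < t then
      Matrix.reindex (finCongr (stDims_lt h).symm) (Equiv.refl _) (A k)ᵀ
    else Matrix.reindex (finCongr (stDims_ge h).symm) (Equiv.refl _)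
      (1 : Matrix (Fin (I k)) (Fin (I k)) ℝ)

/-- The `t`-th partial approximation `X̂^{(t)} = G^{(t)} ×₁ A₁ ⋯ ×ₜ Aₜ` of the STHOSVD. -/
def stPartial {I r : Fin d → ℕ} (X : Tensor d I)
    (A : ∀ j, Matrix (Fin (I j)) (Fin (r j)) ℝ) (t : ℕ) : Tensor d I :=
  Tensor.multiMul (stCore X A t) fun k =>
    if h : (k : ℕ) < t then
      Matrix.reindex (Equiv.refl _) (finCongr (stDims_lt h).symm) (A k)
    else Matrix.reindex (Equiv.refl _) (finCongr (stDims_ge h).symm)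
      (1 : Matrix (Fin (I k)) (Fin (I k)) ℝ)

/-- Column index type for the mode-`j` unfolding of a tensor with dimensions `I`. -/
abbrev colIdx (I : Fin d → ℕ) (j : Fin d) : Type := ∀ k : {k : Fin d // k ≠ j}, Fin (I k.1)

end STHOSVD

/-- Measurable space structure on matrices (entrywise). -/
instance matrixMeasurableSpace (m n : Type*) : MeasurableSpace (Matrix m n ℝ) :=
  inferInstanceAs (MeasurableSpace (m → n → ℝ))

/-- The distribution of a standard Gaussian random matrix: independent `N(0,1)` entries. -/
def gaussMat (m n : Type*) [Fintype m] [Fintype n] : Measure (Matrix m n ℝ) :=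
  (Measure.pi fun _ : m => Measure.pi fun _ : n => gaussianReal 0 1 :
    Measure (m → n → ℝ))

end

noncomputable section

/-- The structure-preserving STHOSVD approximation `X̂ = G^{(d)} ×₁ A₁ ⋯ ×_d A_d`, where
the core `G^{(d)} = X ×₁ P₁ᵀ ⋯ ×_d P_dᵀ` is built from the selection operators `P j` and
the (not necessarily orthonormal) factor matrices are `A j`. -/
def spApprox {d : ℕ} {I L : Fin d → ℕ} (X : Tensor d I)
    (P : ∀ j, Matrix (Fin (I j)) (Fin (L j)) ℝ)
    (A : ∀ j, Matrix (Fin (I j)) (Fin (L j)) ℝ) : Tensor d I :=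
  Tensor.multiMul (stCore X P d) fun k =>
    Matrix.reindex (Equiv.refl _) (finCongr (stDims_lt k.isLt).symm) (A k)

end

/-! ### Auxiliary machinery for the proof of `hosvd_error_bound` -/

noncomputable section HosvdAux

set_option linter.unusedSectionVars false

section CharpolyAux
open Polynomial

variable {m : Type*} [Fintype m] [DecidableEq m]

lemma charpoly_diag (v : m → ℝ) :
    (Matrix.diagonal v).charpoly = ∏ a, (X - C (v a)) := by
  have hcm : charmatrix (Matrix.diagonal v) = Matrix.diagonal (fun a => X - C (v a)) := by
    ext a b
    by_cases h : a = b
    · subst h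
      simp [charmatrix_apply, Matrix.diagonal_apply_eq]
    · simp [charmatrix_apply, Matrix.diagonal_apply_ne _ h, h]
  rw [Matrix.charpoly, hcm, Matrix.det_diagonal]

lemma charpoly_conj_orth (W B : Matrix m m ℝ) (hW : Wᵀ * W = 1) :
    (W * B * Wᵀ).charpoly = B.charpoly := by
  have hW2 : W * Wᵀ = 1 := mul_eq_one_comm.mp hW
  have hcm : charmatrix (W * B * Wᵀ)
      = W.map C * charmatrix B * Wᵀ.map C := by
    unfold charmatrix
    have hscal : W.map C * Matrix.scalar m (X : ℝ[X]) * Wᵀ.map C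
        = Matrix.scalar m (X : ℝ[X]) := by
      have hc : Commute (Matrix.scalar m (X : ℝ[X])) (W.map C) :=
        Matrix.scalar_commute (X : ℝ[X]) (fun r => Commute.all _ r) (W.map C)
      rw [← hc.eq, Matrix.mul_assoc]
      have : W.map C * (Wᵀ).map C = 1 := by
        rw [← Matrix.map_mul, hW2]
        simp
      rw [this, Matrix.mul_one]
    rw [Matrix.mul_sub, Matrix.sub_mul, hscal]
    congr 1
    simp only [RingHom.mapMatrix_apply]
    rw [← Matrix.map_mul, ← Matrix.map_mul]
  rw [Matrix.charpoly, Matrix.charpoly, hcm, Matrix.det_mul, Matrix.det_mul]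
  have hdet : (W.map C).det * (Wᵀ.map C).det = 1 := by
    rw [← Matrix.det_mul, ← Matrix.map_mul, hW2]
    simp
  calc (W.map C).det * (charmatrix B).det * (Wᵀ.map C).det
      = (W.map C).det * (Wᵀ.map C).det * (charmatrix B).det := by ring
    _ = (charmatrix B).det := by rw [hdet, one_mul]

lemma roots_prod_X_sub_C_fn (f : m → ℝ) :
    (∏ a, (X - C (f a))).roots = Multiset.map f Finset.univ.val := by
  have h := Polynomial.roots_multiset_prod_X_sub_C (Multiset.map f Finset.univ.val)
  rw [Multiset.map_map] at h
  rw [Finset.prod_eq_multiset_prod]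
  simpa [Function.comp] using h

/-- Two similar-by-orthogonal real symmetric matrices: multiset of eigenvalues equals
multiset of diagonal entries. -/
lemma eigenvalues_multiset_eq (B : Matrix m m ℝ) (hB : B.IsHermitian)
    (U : Matrix m m ℝ) (hU : Uᵀ * U = 1) (w : m → ℝ)
    (hBeq : B = U * Matrix.diagonal w * Uᵀ) :
    Multiset.map hB.eigenvalues Finset.univ.val = Multiset.map w Finset.univ.val := by
  have hspec := hB.spectral_theorem
  set W : Matrix m m ℝ := (hB.eigenvectorUnitary : Matrix m m ℝ) with hWdef
  have hWo : Wᵀ * W = 1 := by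
    have := hB.eigenvectorUnitary.2
    rw [Matrix.mem_unitaryGroup_iff'] at this
    rw [← Matrix.conjTranspose_eq_transpose_of_trivial]
    exact this
  have hdiag : (Matrix.diagonal (RCLike.ofReal ∘ hB.eigenvalues) : Matrix m m ℝ)
      = Matrix.diagonal hB.eigenvalues := by
    rw [RCLike.ofReal_real_eq_id]
    rfl
  have hstar : star W = Wᵀ := by
    rw [Matrix.star_eq_conjTranspose, Matrix.conjTranspose_eq_transpose_of_trivial]
  have hspec' : B = W * Matrix.diagonal hB.eigenvalues * Wᵀ := by
    rw [← hdiag, ← hstar]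
    exact hspec
  have hchar : (Matrix.diagonal hB.eigenvalues).charpoly = (Matrix.diagonal w).charpoly := by
    rw [← charpoly_conj_orth W (Matrix.diagonal hB.eigenvalues) hWo, ← hspec',
      hBeq, charpoly_conj_orth U (Matrix.diagonal w) hU]
  have := congrArg Polynomial.roots
    (by rw [charpoly_diag, charpoly_diag] at hchar; exact hchar :
      (∏ a, (X - C (hB.eigenvalues a))) = ∏ a, (X - C (w a)))
  rwa [roots_prod_X_sub_C_fn, roots_prod_X_sub_C_fn] at this

end CharpolyAux

section SortAux

/-- Monotone tuples with the same multiset of values are equal. -/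
lemma monotone_unique {n : ℕ} (f g : Fin n → ℝ) (hf : Monotone f) (hg : Monotone g)
    (h : Multiset.map f Finset.univ.val = Multiset.map g Finset.univ.val) : f = g := by
  have hperm : List.Perm (List.ofFn f) (List.ofFn g) := by
    rw [← Multiset.coe_eq_coe]
    have hof : ∀ F : Fin n → ℝ, (↑(List.ofFn F) : Multiset ℝ) = Multiset.map F Finset.univ.val := by
      intro F
      rw [List.ofFn_eq_map]
      rfl
    rw [hof, hof, h]
  exact List.ofFn_injective
    (List.Perm.eq_of_sortedLE
      (List.sortedLE_ofFn_iff.mpr hf) (List.sortedLE_ofFn_iff.mpr hg) hperm)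

lemma multiset_map_comp_perm {n : ℕ} (f : Fin n → ℝ) (σ : Equiv.Perm (Fin n)) :
    Multiset.map (f ∘ σ) Finset.univ.val = Multiset.map f Finset.univ.val := by
  rw [← Multiset.map_map]
  congr 1
  have := Finset.map_univ_equiv σ
  calc Multiset.map (⇑σ) Finset.univ.val
      = (Finset.univ.map σ.toEmbedding).val := by rw [Finset.map_val]; simp
    _ = Finset.univ.val := by rw [this]

lemma multiset_map_comp_equiv {α β : Type*} [Fintype α] [Fintype β] (f : β → ℝ) (e : α ≃ β) :
    Multiset.map (f ∘ e) Finset.univ.val = Multiset.map f Finset.univ.val := by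
  rw [← Multiset.map_map]
  congr 1
  calc Multiset.map (⇑e) Finset.univ.val
      = (Finset.univ.map e.toEmbedding).val := by rw [Finset.map_val]; simp
    _ = Finset.univ.val := by rw [Finset.map_univ_equiv]

end SortAux

section SVDAux

variable {m n : Type*} [Fintype m] [Fintype n] [DecidableEq m] [DecidableEq n]

lemma diagMat_apply (s : ℕ → ℝ) (a : m) (b : n) :
    diagMat m n s a b = if (Fintype.equivFin m a : ℕ) = (Fintype.equivFin n b : ℕ)
      then s (Fintype.equivFin m a) else 0 := rfl

lemma diagMat_mul_transpose (s : ℕ → ℝ)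
    (hs0 : ∀ i, min (Fintype.card m) (Fintype.card n) ≤ i → s i = 0) :
    diagMat m n s * (diagMat m n s)ᵀ
      = Matrix.diagonal (fun a : m => s (Fintype.equivFin m a) ^ 2) := by
  ext a a'
  rw [Matrix.mul_apply]
  simp only [Matrix.transpose_apply, diagMat_apply]
  by_cases haa : a = a'
  · subst haa
    rw [Matrix.diagonal_apply_eq]
    by_cases hcn : ((Fintype.equivFin m a : ℕ)) < Fintype.card n
    · rw [Finset.sum_eq_single ((Fintype.equivFin n).symm ⟨(Fintype.equivFin m a : ℕ), hcn⟩)]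
      · rw [if_pos (by simp), pow_two]
      · intro b _ hb
        have hne : ¬ ((Fintype.equivFin m a : ℕ) = (Fintype.equivFin n b : ℕ)) := by
          intro hc
          apply hb
          have h1 : Fintype.equivFin n b = ⟨(Fintype.equivFin m a : ℕ), hcn⟩ :=
            Fin.ext hc.symm
          rw [← h1, Equiv.symm_apply_apply]
        rw [if_neg hne, zero_mul]
      · intro hmem
        exact absurd (Finset.mem_univ _) hmem
    · have hz : s ((Fintype.equivFin m a : ℕ)) = 0 :=
        hs0 _ (by omega)
      rw [hz]
      rw [Finset.sum_eq_zero]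
      · simp
      · intro b _
        have hne : ¬ ((Fintype.equivFin m a : ℕ) = (Fintype.equivFin n b : ℕ)) := by
          have := (Fintype.equivFin n b).isLt
          omega
        rw [if_neg hne, zero_mul]
  · rw [Matrix.diagonal_apply_ne _ haa]
    rw [Finset.sum_eq_zero]
    intro b _
    by_cases h1 : (Fintype.equivFin m a : ℕ) = (Fintype.equivFin n b : ℕ)
    · have h2 : ¬ ((Fintype.equivFin m a' : ℕ) = (Fintype.equivFin n b : ℕ)) := by
        intro hc
        apply haa
        have : Fintype.equivFin m a = Fintype.equivFin m a' := Fin.ext (by omega)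
        exact (Fintype.equivFin m).injective this
      rw [if_neg h2, mul_zero]
    · rw [if_neg h1, zero_mul]

lemma singularValues_eq_of_isSVD {M : Matrix m n ℝ} {U : Matrix m m ℝ} {s : ℕ → ℝ}
    {V : Matrix n n ℝ} (h : IsSVD M U s V) {i : ℕ} (hi : i < Fintype.card m) :
    singularValues M i = s i := by
  obtain ⟨hU, hV, hanti, hpos, hs0, hM⟩ := h
  have hB : M * Mᴴ = U * Matrix.diagonal (fun a : m => s (Fintype.equivFin m a) ^ 2) * Uᵀ := by
    have hMH : Mᴴ = Mᵀ := Matrix.conjTranspose_eq_transpose_of_trivial M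
    rw [hMH, hM, ← diagMat_mul_transpose s hs0]
    calc (U * diagMat m n s * Vᵀ) * (U * diagMat m n s * Vᵀ)ᵀ
        = U * diagMat m n s * (Vᵀ * V) * (diagMat m n s)ᵀ * Uᵀ := by
          rw [Matrix.transpose_mul, Matrix.transpose_mul, Matrix.transpose_transpose]
          simp only [Matrix.mul_assoc]
      _ = U * (diagMat m n s * (diagMat m n s)ᵀ) * Uᵀ := by
          rw [hV]
          simp only [Matrix.mul_one, Matrix.mul_assoc]
  have hHerm : (M * Mᴴ).IsHermitian := Matrix.isHermitian_mul_conjTranspose_self M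
  have hmult := eigenvalues_multiset_eq (M * Mᴴ) hHerm U hU _ hB
  have hgmono : Monotone ((hHerm.eigenvalues ∘ ⇑(Fintype.equivFin m).symm) ∘
      Tuple.sort (hHerm.eigenvalues ∘ ⇑(Fintype.equivFin m).symm)) :=
    Tuple.monotone_sort _
  have htmono : Monotone (fun p : Fin (Fintype.card m) => s ((Fin.rev p : ℕ)) ^ 2) := by
    intro p q hpq
    have h1 : (Fin.rev q : ℕ) ≤ (Fin.rev p : ℕ) := by
      rw [Fin.val_rev, Fin.val_rev]
      have := q.isLt
      omega
    have h2 : s ((Fin.rev p : ℕ)) ≤ s ((Fin.rev q : ℕ)) := hanti h1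
    exact pow_le_pow_left₀ (hpos _) h2 2
  have hmg : Multiset.map ((hHerm.eigenvalues ∘ ⇑(Fintype.equivFin m).symm) ∘
        Tuple.sort (hHerm.eigenvalues ∘ ⇑(Fintype.equivFin m).symm)) Finset.univ.val
      = Multiset.map (fun p : Fin (Fintype.card m) => s ((Fin.rev p : ℕ)) ^ 2)
          Finset.univ.val := by
    rw [multiset_map_comp_perm]
    rw [multiset_map_comp_equiv hHerm.eigenvalues (Fintype.equivFin m).symm]
    rw [hmult]
    have e1 : (fun a : m => s ((Fintype.equivFin m a : ℕ)) ^ 2)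
        = (fun p : Fin (Fintype.card m) => s ((p : ℕ)) ^ 2) ∘ ⇑(Fintype.equivFin m) := rfl
    have e2 : (fun p : Fin (Fintype.card m) => s ((Fin.rev p : ℕ)) ^ 2)
        = (fun p : Fin (Fintype.card m) => s ((p : ℕ)) ^ 2) ∘ ⇑(Fin.revPerm) := by
      funext p
      simp [Fin.revPerm_apply]
    rw [e1, multiset_map_comp_equiv _ (Fintype.equivFin m), e2, multiset_map_comp_perm]
  have hgt := monotone_unique _ _ hgmono htmono hmg
  simp only [singularValues]
  rw [dif_pos hi]
  have happ := congrFun hgt (⟨Fintype.card m - 1 - i, by omega⟩ : Fin (Fintype.card m))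
  rw [happ]
  have hrev : ((Fin.rev (⟨Fintype.card m - 1 - i, by omega⟩ : Fin (Fintype.card m))) : ℕ)
      = i := by
    rw [Fin.val_rev]
    show Fintype.card m - (Fintype.card m - 1 - i + 1) = i
    omega
  simp only [hrev]
  exact Real.sqrt_sq (hpos i)

end SVDAux

section MatAux

variable {m n : Type*} [Fintype m] [Fintype n] [DecidableEq m] [DecidableEq n]

lemma matFrobSq_eq_trace (N : Matrix m n ℝ) : matFrobSq N = Matrix.trace (Nᵀ * N) := by
  unfold matFrobSq Matrix.trace
  rw [Finset.sum_comm]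
  refine Finset.sum_congr rfl fun j _ => ?_
  simp [Matrix.diag, Matrix.mul_apply, sq]

lemma matFrobSq_mul_orth_left {U : Matrix m m ℝ} (hU : Uᵀ * U = 1) (W : Matrix m n ℝ) :
    matFrobSq (U * W) = matFrobSq W := by
  rw [matFrobSq_eq_trace, matFrobSq_eq_trace]
  congr 1
  rw [Matrix.transpose_mul]
  calc Wᵀ * Uᵀ * (U * W) = Wᵀ * (Uᵀ * U) * W := by simp only [Matrix.mul_assoc]
    _ = Wᵀ * W := by rw [hU, Matrix.mul_one]

lemma matFrobSq_mul_orth_right {V : Matrix n n ℝ} (hV : Vᵀ * V = 1) (W : Matrix m n ℝ) :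
    matFrobSq (W * Vᵀ) = matFrobSq W := by
  rw [matFrobSq_eq_trace, matFrobSq_eq_trace]
  rw [Matrix.transpose_mul, Matrix.transpose_transpose]
  have h1 : Vᵀᵀ * Wᵀ * (W * Vᵀ) = V * (Wᵀ * W) * Vᵀ := by
    rw [Matrix.transpose_transpose]
    simp only [Matrix.mul_assoc]
  calc Matrix.trace (V * Wᵀ * (W * Vᵀ))
      = Matrix.trace (V * (Wᵀ * W) * Vᵀ) := by simp only [Matrix.mul_assoc]
    _ = Matrix.trace (Vᵀ * V * (Wᵀ * W)) := by rw [Matrix.trace_mul_cycle]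
    _ = Matrix.trace (Wᵀ * W) := by rw [hV, Matrix.one_mul]

lemma topLeft_orthonormal {M : Matrix m n ℝ} {U : Matrix m m ℝ} {s : ℕ → ℝ}
    {V : Matrix n n ℝ} (hsvd : IsSVD M U s V) {r : ℕ} (hr : r ≤ Fintype.card m)
    {A : Matrix m (Fin r) ℝ}
    (hAdef : ∀ (a : m) (k : Fin r),
      A a k = U a ((Fintype.equivFin m).symm (Fin.castLE hr k))) :
    Aᵀ * A = 1 := by
  obtain ⟨hU, hV, hanti, hpos, hs0, hM⟩ := hsvd
  have hUcol : ∀ b b' : m, (∑ a, U a b * U a b') = if b = b' then (1:ℝ) else 0 := by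
    intro b b'
    have h := congrFun (congrFun hU b) b'
    simpa [Matrix.mul_apply, Matrix.transpose_apply, Matrix.one_apply] using h
  ext k l
  rw [Matrix.mul_apply]
  simp only [Matrix.transpose_apply, hAdef]
  rw [hUcol]
  by_cases hkl : k = l
  · subst hkl
    rw [if_pos rfl, Matrix.one_apply_eq]
  · rw [if_neg, Matrix.one_apply_ne hkl]
    intro hc
    apply hkl
    have h1 := (Fintype.equivFin m).symm.injective hc
    exact Fin.castLE_injective hr h1

lemma topLeft_matFrobSq {M : Matrix m n ℝ} {U : Matrix m m ℝ} {s : ℕ → ℝ}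
    {V : Matrix n n ℝ} (hsvd : IsSVD M U s V) {r : ℕ} (hr : r ≤ Fintype.card m)
    {A : Matrix m (Fin r) ℝ}
    (hAdef : ∀ (a : m) (k : Fin r),
      A a k = U a ((Fintype.equivFin m).symm (Fin.castLE hr k))) :
    matFrobSq ((1 - A * Aᵀ) * M) = ∑ i ∈ Finset.Ico r (Fintype.card m), (s i) ^ 2 := by
  obtain ⟨hU, hV, hanti, hpos, hs0, hM⟩ := hsvd
  have hUcol : ∀ b b' : m, (∑ a, U a b * U a b') = if b = b' then (1:ℝ) else 0 := by
    intro b b'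
    have h := congrFun (congrFun hU b) b'
    simpa [Matrix.mul_apply, Matrix.transpose_apply, Matrix.one_apply] using h
  set f : Fin r → m := fun k => (Fintype.equivFin m).symm (Fin.castLE hr k) with hf
  have hfinj : Function.Injective f := by
    intro k l hkl
    have h1 := (Fintype.equivFin m).symm.injective hkl
    exact Fin.castLE_injective hr h1
  set v : m → ℝ := fun b => if ((Fintype.equivFin m b : ℕ)) < r then 0 else 1 with hv
  have hQU : (1 - A * Aᵀ) * U = U * Matrix.diagonal v := by
    ext a b
    rw [Matrix.sub_mul, Matrix.one_mul, Matrix.sub_apply, Matrix.mul_diagonal]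
    have hAU : ∀ k : Fin r, (Aᵀ * U) k b = if f k = b then 1 else 0 := by
      intro k
      rw [Matrix.mul_apply]
      simp only [Matrix.transpose_apply, hAdef]
      exact hUcol (f k) b
    have hPU : (A * Aᵀ * U) a b = if ((Fintype.equivFin m b : ℕ)) < r then U a b else 0 := by
      rw [Matrix.mul_assoc, Matrix.mul_apply]
      by_cases hbr : ((Fintype.equivFin m b : ℕ)) < r
      · rw [if_pos hbr]
        have hfk0 : f (⟨(Fintype.equivFin m b : ℕ), hbr⟩ : Fin r) = b := by
          show (Fintype.equivFin m).symm _ = b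
          have hcast : Fin.castLE hr (⟨(Fintype.equivFin m b : ℕ), hbr⟩ : Fin r)
              = Fintype.equivFin m b := Fin.ext rfl
          rw [hcast, Equiv.symm_apply_apply]
        rw [Finset.sum_eq_single (⟨(Fintype.equivFin m b : ℕ), hbr⟩ : Fin r)]
        · rw [hAU, if_pos hfk0, mul_one, hAdef]
          exact congrArg (U a) hfk0
        · intro k _ hk
          rw [hAU, if_neg, mul_zero]
          intro hc
          exact hk (hfinj (hc.trans hfk0.symm))
        · intro hmem
          exact absurd (Finset.mem_univ _) hmem
      · rw [if_neg hbr]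
        refine Finset.sum_eq_zero fun k _ => ?_
        rw [hAU, if_neg, mul_zero]
        intro hc
        apply hbr
        have h1 : Fintype.equivFin m b = Fin.castLE hr k := by
          rw [← hc]
          exact Equiv.apply_symm_apply _ _
        have h2 : (Fintype.equivFin m b : ℕ) = (k : ℕ) := congrArg Fin.val h1
        rw [h2]
        exact k.isLt
    rw [hPU]
    simp only [hv]
    by_cases hbr : ((Fintype.equivFin m b : ℕ)) < r
    · rw [if_pos hbr, if_pos hbr, mul_zero, sub_self]
    · rw [if_neg hbr, if_neg hbr, mul_one, sub_zero]
  have hfact : (1 - A * Aᵀ) * M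
      = U * (Matrix.diagonal v * diagMat m n s) * Vᵀ := by
    rw [hM]
    calc (1 - A * Aᵀ) * (U * diagMat m n s * Vᵀ)
        = ((1 - A * Aᵀ) * U) * diagMat m n s * Vᵀ := by simp only [Matrix.mul_assoc]
      _ = (U * Matrix.diagonal v) * diagMat m n s * Vᵀ := by rw [hQU]
      _ = U * (Matrix.diagonal v * diagMat m n s) * Vᵀ := by simp only [Matrix.mul_assoc]
  rw [hfact]
  have h1 : matFrobSq (U * (Matrix.diagonal v * diagMat m n s) * Vᵀ)
      = matFrobSq (Matrix.diagonal v * diagMat m n s) := by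
    rw [matFrobSq_mul_orth_right hV, matFrobSq_mul_orth_left hU]
  rw [h1]
  have hDD := diagMat_mul_transpose (m := m) (n := n) s hs0
  have hrow : ∀ a : m, (∑ b, (diagMat m n s a b) ^ 2)
      = s ((Fintype.equivFin m a : ℕ)) ^ 2 := by
    intro a
    have h2 := congrFun (congrFun hDD a) a
    rw [Matrix.mul_apply] at h2
    simp only [Matrix.transpose_apply, Matrix.diagonal_apply_eq] at h2
    rw [← h2]
    refine Finset.sum_congr rfl fun b _ => ?_
    rw [sq]
  have h3 : matFrobSq (Matrix.diagonal v * diagMat m n s)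
      = ∑ a : m, v a ^ 2 * s ((Fintype.equivFin m a : ℕ)) ^ 2 := by
    unfold matFrobSq
    refine Finset.sum_congr rfl fun a _ => ?_
    rw [← hrow a, Finset.mul_sum]
    refine Finset.sum_congr rfl fun b _ => ?_
    rw [Matrix.diagonal_mul, mul_pow]
  rw [h3]
  have h4 : (∑ a : m, v a ^ 2 * s ((Fintype.equivFin m a : ℕ)) ^ 2)
      = ∑ p : Fin (Fintype.card m), (if (p : ℕ) < r then 0 else s (p : ℕ) ^ 2) := by
    refine Fintype.sum_equiv (Fintype.equivFin m) _ _ fun a => ?_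
    simp only [hv]
    by_cases hbr : ((Fintype.equivFin m a : ℕ)) < r
    · rw [if_pos hbr, if_pos hbr]
      ring
    · rw [if_neg hbr, if_neg hbr]
      ring
  rw [h4]
  have h5 : (∑ p : Fin (Fintype.card m), (if (p : ℕ) < r then (0:ℝ) else s (p : ℕ) ^ 2))
      = ∑ i ∈ Finset.range (Fintype.card m), (if i < r then (0:ℝ) else s i ^ 2) :=
    Fin.sum_univ_eq_sum_range (fun i => if i < r then (0:ℝ) else s i ^ 2) (Fintype.card m)
  rw [h5]
  have h6 : ∀ i, (if i < r then (0:ℝ) else s i ^ 2) = if r ≤ i then s i ^ 2 else 0 := by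
    intro i
    by_cases hir : i < r
    · rw [if_pos hir, if_neg (by omega)]
    · rw [if_neg hir, if_pos (by omega)]
  simp only [h6]
  rw [← Finset.sum_filter]
  congr 1
  ext i
  simp only [Finset.mem_filter, Finset.mem_range, Finset.mem_Ico]
  omega

end MatAux

namespace Tensor

variable {d : ℕ} {I J : Fin d → ℕ}

def tinner (X Y : Tensor d I) : ℝ := ∑ i, X i * Y i

lemma frobSq_eq_tinner (X : Tensor d I) : frobSq X = tinner X X := by
  simp [frobSq, tinner, sq]

lemma tinner_comm (X Y : Tensor d I) : tinner X Y = tinner Y X := by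
  simp [tinner, mul_comm]

lemma frobSq_nonneg (X : Tensor d I) : 0 ≤ frobSq X :=
  Finset.sum_nonneg fun _ _ => sq_nonneg _

lemma frobSq_add (X Y : Tensor d I) :
    frobSq (X + Y) = frobSq X + 2 * tinner X Y + frobSq Y := by
  simp only [frobSq, tinner, Pi.add_apply, add_sq, Finset.sum_add_distrib, Finset.mul_sum]
  ring_nf

lemma modeMul_one (X : Tensor d I) (j : Fin d) : modeMul X j 1 = X := by
  funext i
  simp [modeMul, Matrix.one_apply, ite_mul, Finset.sum_ite_eq, Function.update_eq_self]

lemma modeMul_mul (X : Tensor d I) (j : Fin d) (M N : Matrix (Fin (I j)) (Fin (I j)) ℝ) :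
    modeMul (modeMul X j M) j N = modeMul X j (N * M) := by
  funext i
  simp only [modeMul, Matrix.mul_apply, Function.update_self, Function.update_idem,
    Finset.mul_sum, Finset.sum_mul]
  rw [Finset.sum_comm]
  simp [mul_assoc]

lemma modeMul_matsub (X : Tensor d I) (j : Fin d) (M N : Matrix (Fin (I j)) (Fin (I j)) ℝ) :
    modeMul X j (M - N) = modeMul X j M - modeMul X j N := by
  funext i
  simp [modeMul, Matrix.sub_apply, sub_mul, Finset.sum_sub_distrib]

lemma modeMul_matadd (X : Tensor d I) (j : Fin d) (M N : Matrix (Fin (I j)) (Fin (I j)) ℝ) :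
    modeMul X j (M + N) = modeMul X j M + modeMul X j N := by
  funext i
  simp [modeMul, Matrix.add_apply, add_mul, Finset.sum_add_distrib]

lemma modeMul_sub (X Y : Tensor d I) (j : Fin d) (M : Matrix (Fin (I j)) (Fin (I j)) ℝ) :
    modeMul (X - Y) j M = modeMul X j M - modeMul Y j M := by
  funext i
  simp [modeMul, mul_sub, Finset.sum_sub_distrib]

lemma modeMul_zero (X : Tensor d I) (j : Fin d) :
    modeMul X j (0 : Matrix (Fin (I j)) (Fin (I j)) ℝ) = 0 := by
  funext i; simp [modeMul]

lemma tinner_modeMul (X Y : Tensor d I) (j : Fin d) (M : Matrix (Fin (I j)) (Fin (I j)) ℝ) :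
    tinner (modeMul X j M) Y = tinner X (modeMul Y j Mᵀ) := by
  unfold tinner modeMul
  calc ∑ i, (∑ k, M (i j) k * X (Function.update i j k)) * Y i
      = ∑ p : (∀ l, Fin (I l)) × Fin (I j),
          M (p.1 j) p.2 * X (Function.update p.1 j p.2) * Y p.1 := by
        rw [Fintype.sum_prod_type]
        simp [Finset.sum_mul]
    _ = ∑ p : (∀ l, Fin (I l)) × Fin (I j),
          X p.1 * (Mᵀ (p.1 j) p.2 * Y (Function.update p.1 j p.2)) := by
        refine Fintype.sum_equiv
          ⟨fun p => (Function.update p.1 j p.2, p.1 j),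
           fun p => (Function.update p.1 j p.2, p.1 j), ?_, ?_⟩ _ _ ?_
        · intro p
          simp [Function.update_idem, Function.update_eq_self]
        · intro p
          simp [Function.update_idem, Function.update_eq_self]
        · intro p
          simp only [Equiv.coe_fn_mk, Matrix.transpose_apply, Function.update_self,
            Function.update_idem, Function.update_eq_self]
          ring
    _ = ∑ i, X i * ∑ k, Mᵀ (i j) k * Y (Function.update i j k) := by
        rw [Fintype.sum_prod_type]
        simp [Finset.mul_sum]

lemma tinner_modeMul_proj (X Y : Tensor d I) (j : Fin d)
    {P : Matrix (Fin (I j)) (Fin (I j)) ℝ} (hsym : Pᵀ = P) (hidem : P * P = P) :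
    tinner (modeMul X j (1 - P)) (modeMul Y j P) = 0 := by
  rw [tinner_modeMul, modeMul_mul]
  have : (1 - P)ᵀ * P = 0 := by
    rw [Matrix.transpose_sub, Matrix.transpose_one, hsym, Matrix.sub_mul, one_mul, hidem,
      sub_self]
  rw [this, modeMul_zero]
  simp [tinner]

lemma frobSq_modeMul_split (X : Tensor d I) (j : Fin d)
    {P : Matrix (Fin (I j)) (Fin (I j)) ℝ} (hsym : Pᵀ = P) (hidem : P * P = P) :
    frobSq X = frobSq (modeMul X j P) + frobSq (modeMul X j (1 - P)) := by
  have hx : X = modeMul X j P + modeMul X j (1 - P) := by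
    rw [← modeMul_matadd, add_sub_cancel, modeMul_one]
  conv_lhs => rw [hx]
  rw [frobSq_add, tinner_comm, tinner_modeMul_proj X X j hsym hidem]
  ring

lemma frobSq_modeMul_le (X : Tensor d I) (j : Fin d)
    {P : Matrix (Fin (I j)) (Fin (I j)) ℝ} (hsym : Pᵀ = P) (hidem : P * P = P) :
    frobSq (modeMul X j P) ≤ frobSq X := by
  rw [frobSq_modeMul_split X j hsym hidem]
  have := frobSq_nonneg (modeMul X j (1 - P))
  linarith

lemma multiMul_multiMul {J K : Fin d → ℕ} (X : Tensor d K)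
    (B : ∀ j, Matrix (Fin (J j)) (Fin (K j)) ℝ) (A : ∀ j, Matrix (Fin (I j)) (Fin (J j)) ℝ) :
    multiMul (multiMul X B) A = multiMul X (fun j => A j * B j) := by
  funext i
  unfold multiMul
  simp only [Finset.mul_sum, Matrix.mul_apply]
  rw [Finset.sum_comm]
  refine Finset.sum_congr rfl fun m _ => ?_
  have key : ∑ k : ∀ j, Fin (J j), (∏ j, A j (i j) (k j)) * ((∏ j, B j (k j) (m j)) * X m)
      = (∑ k : ∀ j, Fin (J j), ∏ j, A j (i j) (k j) * B j (k j) (m j)) * X m := by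
    rw [Finset.sum_mul]
    refine Finset.sum_congr rfl fun k _ => ?_
    rw [← mul_assoc, ← Finset.prod_mul_distrib]
  rw [key]
  congr 1
  have := Finset.prod_univ_sum (fun j : Fin d => (Finset.univ : Finset (Fin (J j))))
    (fun j x => A j (i j) x * B j x (m j))
  rw [this]
  rw [Fintype.piFinset_univ]

lemma multiMul_one (X : Tensor d I) :
    multiMul X (fun j => (1 : Matrix (Fin (I j)) (Fin (I j)) ℝ)) = X := by
  funext i
  unfold multiMul
  rw [Fintype.sum_eq_single i]
  · simp [Matrix.one_apply_eq]
  · intro k hk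
    have : ∃ l, i l ≠ k l := by
      by_contra hcon
      push_neg at hcon
      exact hk (funext fun l => (hcon l).symm)
    obtain ⟨l, hl⟩ := this
    rw [Finset.prod_eq_zero (Finset.mem_univ l)]
    · ring
    · simp [Matrix.one_apply, hl]

lemma multiMul_update_one (X : Tensor d I) (j : Fin d)
    (M : Matrix (Fin (I j)) (Fin (I j)) ℝ) :
    multiMul X (Function.update (fun k => (1 : Matrix (Fin (I k)) (Fin (I k)) ℝ)) j M)
      = modeMul X j M := by
  funext i
  unfold multiMul modeMul
  set Q := Function.update (fun k => (1 : Matrix (Fin (I k)) (Fin (I k)) ℝ)) j M with hQ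
  rw [← Fintype.sum_equiv (Equiv.piSplitAt j (fun l => Fin (I l))).symm
    (fun p : Fin (I j) × (∀ l : {l : Fin d // l ≠ j}, Fin (I l.1)) =>
      (∏ l, Q l (i l) ((Equiv.piSplitAt j (fun l => Fin (I l))).symm p l)) *
        X ((Equiv.piSplitAt j (fun l => Fin (I l))).symm p))
    (fun k => (∏ l, Q l (i l) (k l)) * X k)]
  swap
  · intro p; rfl
  rw [Fintype.sum_prod_type]
  refine Finset.sum_congr rfl fun c _ => ?_
  rw [Fintype.sum_eq_single (fun l : {l : Fin d // l ≠ j} => i l.1)]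
  · have hcomb : (Equiv.piSplitAt j (fun l => Fin (I l))).symm
        (c, fun l : {l : Fin d // l ≠ j} => i l.1) = Function.update i j c := by
      funext l
      by_cases hl : l = j
      · subst hl
        simp [Equiv.piSplitAt_symm_apply, Function.update_self]
      · simp [Equiv.piSplitAt_symm_apply, hl, Function.update_of_ne hl]
    rw [hcomb]
    congr 1
    have h1 : Q j (i j) (Function.update i j c j) = M (i j) c := by
      simp [hQ, Function.update_self]
    have h2 : ∏ l ∈ Finset.univ.erase j, Q l (i l) (Function.update i j c l) = 1 := by
      refine Finset.prod_eq_one fun l hl => ?_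
      have hlj : l ≠ j := (Finset.mem_erase.mp hl).1
      simp [hQ, Function.update_of_ne hlj, Matrix.one_apply_eq]
    rw [← Finset.mul_prod_erase Finset.univ _ (Finset.mem_univ j), h1, h2, mul_one]
  · intro b hb
    have : ∃ l : {l : Fin d // l ≠ j}, b l ≠ i l.1 := by
      by_contra hcon
      push_neg at hcon
      exact hb (funext fun l => hcon l)
    obtain ⟨l, hl⟩ := this
    rw [Finset.prod_eq_zero (Finset.mem_univ l.1)]
    · ring
    · have : (Equiv.piSplitAt j (fun l => Fin (I l))).symm (c, b) l.1 = b l := by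
        simp [Equiv.piSplitAt_symm_apply, l.2]
      rw [this]
      simp [hQ, Function.update_of_ne l.2, Matrix.one_apply, (Ne.symm hl)]

lemma multiMul_update (X : Tensor d I) (Q : ∀ j, Matrix (Fin (I j)) (Fin (I j)) ℝ)
    (j : Fin d) (M : Matrix (Fin (I j)) (Fin (I j)) ℝ) :
    multiMul X (Function.update Q j M)
      = modeMul (multiMul X (Function.update Q j 1)) j M := by
  have hfac : Function.update Q j M = fun k =>
      Function.update (fun l => (1 : Matrix (Fin (I l)) (Fin (I l)) ℝ)) j M k *
        Function.update Q j 1 k := by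
    funext k
    by_cases hk : k = j
    · subst hk
      simp [Function.update_self]
    · simp [Function.update_of_ne hk]
  rw [hfac, ← multiMul_multiMul, multiMul_update_one]

def projSeq (P : ∀ j, Matrix (Fin (I j)) (Fin (I j)) ℝ) (t : ℕ) :
    ∀ j, Matrix (Fin (I j)) (Fin (I j)) ℝ :=
  fun j => if (j : ℕ) < t then P j else 1

lemma modeMulFirst_eq_multiMul (X : Tensor d I) (P : ∀ j, Matrix (Fin (I j)) (Fin (I j)) ℝ)
    (t : ℕ) : modeMulFirst X P t = multiMul X (projSeq P t) := by
  induction t with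
  | zero =>
    have : projSeq P 0 = fun j => (1 : Matrix (Fin (I j)) (Fin (I j)) ℝ) := by
      funext j; simp [projSeq]
    rw [this, multiMul_one]
    rfl
  | succ t ih =>
    by_cases h : t < d
    · have h2 : projSeq P (t + 1) = Function.update (projSeq P t) ⟨t, h⟩ (P ⟨t, h⟩) := by
        funext k
        by_cases hk : k = ⟨t, h⟩
        · subst hk
          simp [projSeq, Function.update_self]
        · have hkt : (k : ℕ) ≠ t := fun hc => hk (Fin.ext hc)
          rw [Function.update_of_ne hk]
          simp only [projSeq]
          congr 1
          simp only [eq_iff_iff]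
          omega
      have h1 : Function.update (projSeq P t) ⟨t, h⟩ 1 = projSeq P t := by
        funext k
        by_cases hk : k = ⟨t, h⟩
        · subst hk
          simp [projSeq, Function.update_self]
        · rw [Function.update_of_ne hk]
      show modeMulFirst X P (t+1) = _
      rw [modeMulFirst, dif_pos h, ih, h2, multiMul_update, h1]
    · show modeMulFirst X P (t+1) = _
      rw [modeMulFirst, dif_neg h, ih]
      have hQ : projSeq P t = projSeq P (t+1) := by
        funext k
        have hk := k.isLt
        have : ((k : ℕ) < t) = ((k : ℕ) < t + 1) := by
          simp only [eq_iff_iff]; omega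
        simp only [projSeq, this]
      rw [hQ]

lemma multiMul_eq_modeMulFirst (X : Tensor d I) (P : ∀ j, Matrix (Fin (I j)) (Fin (I j)) ℝ) :
    multiMul X P = modeMulFirst X P d := by
  rw [modeMulFirst_eq_multiMul]
  have hP : projSeq P d = P := by
    funext j
    simp [projSeq, j.isLt]
  rw [hP]

lemma main_ineq (X : Tensor d I) (P : ∀ j, Matrix (Fin (I j)) (Fin (I j)) ℝ)
    (hsym : ∀ j, (P j)ᵀ = P j) (hidem : ∀ j, P j * P j = P j) (t : ℕ) :
    frobSq (X - modeMulFirst X P t) ≤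
      ∑ j ∈ Finset.univ.filter (fun j : Fin d => (j : ℕ) < t),
        frobSq (modeMul X j (1 - P j)) := by
  induction t with
  | zero =>
    have h0 : X - modeMulFirst X P 0 = 0 := by
      show X - X = 0; simp
    rw [h0]
    have : frobSq (0 : Tensor d I) = 0 := by simp [frobSq]
    rw [this]
    refine Finset.sum_nonneg fun j _ => frobSq_nonneg _
  | succ t ih =>
    by_cases h : t < d
    · set jt : Fin d := ⟨t, h⟩
      have hstep : modeMulFirst X P (t+1) = modeMul (modeMulFirst X P t) jt (P jt) := by
        rw [modeMulFirst, dif_pos h]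
      have hdecomp : X - modeMulFirst X P (t+1)
          = modeMul X jt (1 - P jt) + modeMul (X - modeMulFirst X P t) jt (P jt) := by
        rw [hstep, modeMul_sub, modeMul_matsub, modeMul_one]
        abel
      rw [hdecomp, frobSq_add, tinner_modeMul_proj _ _ _ (hsym jt) (hidem jt)]
      have hcontr := frobSq_modeMul_le (X - modeMulFirst X P t) jt (hsym jt) (hidem jt)
      have hfil : Finset.univ.filter (fun j : Fin d => (j : ℕ) < t + 1)
          = insert jt (Finset.univ.filter (fun j : Fin d => (j : ℕ) < t)) := by
        ext k
        simp only [Finset.mem_filter, Finset.mem_insert, Finset.mem_univ, true_and]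
        constructor
        · intro hk
          by_cases hkt : (k : ℕ) = t
          · exact Or.inl (Fin.ext hkt)
          · exact Or.inr (by omega)
        · rintro (rfl | hk)
          · exact Nat.lt_succ_self t
          · omega
      have hnotmem : jt ∉ Finset.univ.filter (fun j : Fin d => (j : ℕ) < t) := by
        simp [jt]
      rw [hfil, Finset.sum_insert hnotmem]
      have := ih
      linarith
    · have hstep : modeMulFirst X P (t+1) = modeMulFirst X P t := by
        rw [modeMulFirst, dif_neg h]
      have hfil : Finset.univ.filter (fun j : Fin d => (j : ℕ) < t + 1)
          = Finset.univ.filter (fun j : Fin d => (j : ℕ) < t) := by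
        ext k
        have := k.isLt
        simp only [Finset.mem_filter, Finset.mem_univ, true_and]
        omega
      rw [hstep, hfil]
      exact ih

lemma hosvd_ineq (X : Tensor d I) (P : ∀ j, Matrix (Fin (I j)) (Fin (I j)) ℝ)
    (hsym : ∀ j, (P j)ᵀ = P j) (hidem : ∀ j, P j * P j = P j) :
    frobSq (X - multiMul X P) ≤ ∑ j, frobSq (modeMul X j (1 - P j)) := by
  rw [multiMul_eq_modeMulFirst]
  have := main_ineq X P hsym hidem d
  have hfil : Finset.univ.filter (fun j : Fin d => (j : ℕ) < d) = Finset.univ := by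
    ext k
    simp [k.isLt]
  rwa [hfil] at this

/-- The combining map from a row index and a column index to a multi-index. -/
def combine (I : Fin d → ℕ) (j : Fin d) (a : Fin (I j))
    (b : ∀ k : {k : Fin d // k ≠ j}, Fin (I k.1)) : ∀ k, Fin (I k) :=
  fun k => if h : k = j then Fin.cast (congrArg I h.symm) a else b ⟨k, h⟩

lemma unfold_apply (X : Tensor d I) (j : Fin d) (a : Fin (I j))
    (b : ∀ k : {k : Fin d // k ≠ j}, Fin (I k.1)) :
    unfold X j a b = X (combine I j a b) := rfl

lemma combine_self (I : Fin d → ℕ) (j : Fin d) (a : Fin (I j))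
    (b : ∀ k : {k : Fin d // k ≠ j}, Fin (I k.1)) : combine I j a b j = a := by
  simp only [combine, dif_pos rfl]
  exact Fin.ext rfl

lemma combine_update (I : Fin d → ℕ) (j : Fin d) (a c : Fin (I j))
    (b : ∀ k : {k : Fin d // k ≠ j}, Fin (I k.1)) :
    Function.update (combine I j a b) j c = combine I j c b := by
  funext k
  by_cases hk : k = j
  · subst hk
    rw [Function.update_self, combine_self]
  · rw [Function.update_of_ne hk]
    simp only [combine, dif_neg hk]

/-- The splitting equivalence. -/
def splitEquiv (I : Fin d → ℕ) (j : Fin d) :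
    (∀ k, Fin (I k)) ≃ Fin (I j) × (∀ k : {k : Fin d // k ≠ j}, Fin (I k.1)) where
  toFun i := (i j, fun k => i k.1)
  invFun p := combine I j p.1 p.2
  left_inv i := by
    funext k
    by_cases hk : k = j
    · subst hk
      exact combine_self I k (i k) _
    · simp only [combine, dif_neg hk]
  right_inv p := by
    refine Prod.ext (combine_self I j p.1 p.2) ?_
    funext k
    simp only [combine, dif_neg k.2]

lemma frobSq_eq_matFrobSq (X : Tensor d I) (j : Fin d) :
    frobSq X = ∑ a, ∑ b, (unfold X j a b) ^ 2 := by
  unfold frobSq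
  rw [Fintype.sum_equiv (splitEquiv I j)
    (fun i => X i ^ 2)
    (fun p => (unfold X j p.1 p.2) ^ 2) ?_, Fintype.sum_prod_type]
  intro i
  simp only [splitEquiv, Equiv.coe_fn_mk, unfold_apply]
  congr 1
  exact congrArg X ((splitEquiv I j).left_inv i).symm

lemma unfold_modeMul (X : Tensor d I) (j : Fin d) (M : Matrix (Fin (I j)) (Fin (I j)) ℝ) :
    unfold (modeMul X j M) j = M * unfold X j := by
  ext a b
  simp only [unfold_apply, modeMul, Matrix.mul_apply]
  rw [combine_self]
  refine Finset.sum_congr rfl fun c _ => ?_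
  rw [combine_update]

end Tensor

end HosvdAux

/-- HOSVD error bound: if `X̂ = G ×₁ A₁ ⋯ ×_d A_d` is the rank-`r`
HOSVD approximation of `X` (each `A j` consists of the first `r j` left singular vectors
of the mode-`j` unfolding of `X`, and `G = X ×₁ A₁ᵀ ⋯ ×_d A_dᵀ`), then
`‖X − X̂‖_F² ≤ Σ_j ‖X ×_j (I − A_j A_jᵀ)‖_F² = Σ_j Σ_{i>r_j} σ_i(X_(j))²`. -/
theorem hosvd_error_bound
    (d : ℕ) (I r : Fin d → ℕ) (X : Tensor d I)
    (A : ∀ j, Matrix (Fin (I j)) (Fin (r j)) ℝ)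
    (hA : ∀ j, IsTopLeftSingVecs (Tensor.unfold X j) (r j) (A j)) :
    Tensor.frobSq (X - Tensor.multiMul (Tensor.multiMul X fun j => (A j)ᵀ) A) ≤
      (∑ j, Tensor.frobSq (Tensor.modeMul X j (1 - A j * (A j)ᵀ))) ∧
    (∑ j, Tensor.frobSq (Tensor.modeMul X j (1 - A j * (A j)ᵀ))) =
      ∑ j, ∑ i ∈ Finset.Ico (r j) (I j), (singularValues (Tensor.unfold X j) i) ^ 2 := by
  have hAfacts : ∀ j, (A j)ᵀ * A j = 1 := by
    intro j
    obtain ⟨U, s, V, hsvd, hr, hAdef⟩ := hA j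
    exact topLeft_orthonormal hsvd hr hAdef
  have hsym : ∀ j, (A j * (A j)ᵀ)ᵀ = A j * (A j)ᵀ := by
    intro j
    rw [Matrix.transpose_mul, Matrix.transpose_transpose]
  have hidem : ∀ j, (A j * (A j)ᵀ) * (A j * (A j)ᵀ) = A j * (A j)ᵀ := by
    intro j
    calc A j * (A j)ᵀ * (A j * (A j)ᵀ) = A j * ((A j)ᵀ * A j) * (A j)ᵀ := by
          simp only [Matrix.mul_assoc]
      _ = A j * (A j)ᵀ := by rw [hAfacts j, Matrix.mul_one]
  constructor
  · have hcomp : Tensor.multiMul (Tensor.multiMul X fun j => (A j)ᵀ) A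
        = Tensor.multiMul X (fun j => A j * (A j)ᵀ) := Tensor.multiMul_multiMul X _ A
    rw [hcomp]
    exact Tensor.hosvd_ineq X (fun j => A j * (A j)ᵀ) hsym hidem
  · refine Finset.sum_congr rfl fun j _ => ?_
    obtain ⟨U, s, V, hsvd, hr, hAdef⟩ := hA j
    have h1 : Tensor.frobSq (Tensor.modeMul X j (1 - A j * (A j)ᵀ))
        = matFrobSq ((1 - A j * (A j)ᵀ) * Tensor.unfold X j) := by
      rw [Tensor.frobSq_eq_matFrobSq (Tensor.modeMul X j (1 - A j * (A j)ᵀ)) j,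
        Tensor.unfold_modeMul]
      rfl
    rw [h1, topLeft_matFrobSq hsvd hr hAdef]
    refine Finset.sum_congr ?_ fun i hi => ?_
    · rw [Fintype.card_fin]
    · have hi2 : i < Fintype.card (Fin (I j)) := by
        rw [Fintype.card_fin]
        exact (Finset.mem_Ico.mp hi).2
      rw [singularValues_eq_of_isSVD hsvd hi2]
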